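/- arXiv:1306.5375 — 7 statements merged into one kernel-verified Lean document; each statement's English description precedes it below -/
import Mathlib

section
/- For all real β with 0 < β < π and all real θ, we have |−2cos β + 4e^{−iθ}cos²β − 3e^{−iθ} + e^{iθ}| ≤ |4 − 2cos²β − 2cos β cos θ|. -/
open Complex Real

theorem stmt_0 (β θ : ℝ) (hβ0 : 0 < β) (hβπ : β < Real.pi) :
    ‖(-2 * Real.cos β + 4 * Complex.exp (-Complex.I * θ) * (Real.cos β) ^ 2
        - 3 * Complex.exp (-Complex.I * θ) + Complex.exp (Complex.I * θ))‖ ≤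
      |4 - 2 * Real.cos β ^ 2 - 2 * Real.cos β * Real.cos θ| := by
  set c := Real.cos β with hc
  have hz : (-2 * (c:ℂ) + 4 * Complex.exp (-Complex.I * θ) * (c:ℂ) ^ 2
        - 3 * Complex.exp (-Complex.I * θ) + Complex.exp (Complex.I * θ))
      = Complex.ofReal (-2*c + (4*c^2-2)*Real.cos θ)
        + Complex.ofReal ((4-4*c^2)*Real.sin θ) * Complex.I := by
    rw [show -Complex.I * θ = ((-θ:ℝ):ℂ) * Complex.I by push_cast; ring,
        show Complex.I * θ = ((θ:ℝ):ℂ) * Complex.I by push_cast; ring,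
        Complex.exp_mul_I, Complex.exp_mul_I]
    simp only [← Complex.ofReal_cos, ← Complex.ofReal_sin, Real.cos_neg, Real.sin_neg]
    push_cast
    ring
  rw [hz, Complex.norm_def, Complex.normSq_apply]
  simp only [Complex.add_re, Complex.add_im, Complex.ofReal_re, Complex.ofReal_im,
    Complex.mul_re, Complex.mul_im, Complex.I_re, Complex.I_im]
  rw [← Real.sqrt_sq_eq_abs]
  apply Real.sqrt_le_sqrt
  have h1 : Real.sin θ ^ 2 + Real.cos θ ^ 2 = 1 := Real.sin_sq_add_cos_sq θ
  have h2 : -1 ≤ c := Real.neg_one_le_cos β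
  have h3 : c ≤ 1 := Real.cos_le_one β
  have h4 : (1 - c^2)^2 * (Real.sin θ^2 + Real.cos θ^2 - 1) = 0 := by rw [h1]; ring
  nlinarith [h4, mul_nonneg (mul_nonneg (sub_nonneg.2 h3) (by linarith : (0:ℝ) ≤ 1 + c)) (sq_nonneg (c - Real.cos θ))]
end

section
/- For all real β with 0 < β < π and all real θ, we have |cos β (e^{−iθ} − 5)| < |6 − cos²β + 2e^{−iθ} − 3e^{−iθ}cos²β|. -/
open Complex Real

theorem stmt_2 (β θ : ℝ) (hβ0 : 0 < β) (hβπ : β < Real.pi) :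
    ‖(Real.cos β : ℂ) * (Complex.exp (-Complex.I * θ) - 5)‖ <
      ‖6 - (Real.cos β : ℂ) ^ 2 + 2 * Complex.exp (-Complex.I * θ)
        - 3 * Complex.exp (-Complex.I * θ) * (Real.cos β) ^ 2‖ := by
  have hc1 : Real.cos β < 1 := by
    have := Real.cos_lt_cos_of_nonneg_of_le_pi (le_refl 0) hβπ.le hβ0
    simpa using this
  have hc2 : -1 < Real.cos β := by
    have := Real.cos_lt_cos_of_nonneg_of_le_pi hβ0.le (le_refl Real.pi) hβπ
    simpa using this
  set c := Real.cos β with hcdef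
  set t := Real.cos θ with htdef
  set s := Real.sin θ with hsdef
  have hz : Complex.exp (-Complex.I * θ) = (t : ℂ) + ((-s : ℝ) : ℂ) * Complex.I := by
    rw [show -Complex.I * (θ : ℂ) = ((-θ : ℝ) : ℂ) * Complex.I by push_cast; ring,
      Complex.exp_mul_I, ← Complex.ofReal_cos, ← Complex.ofReal_sin]
    push_cast
    simp [Real.cos_neg, Real.sin_neg, htdef, hsdef]
  have hL : (c : ℂ) * (Complex.exp (-Complex.I * θ) - 5)
      = ((c * (t - 5) : ℝ) : ℂ) + ((-(c * s) : ℝ) : ℂ) * Complex.I := by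
    rw [hz]; push_cast; ring
  have hR : 6 - (c : ℂ) ^ 2 + 2 * Complex.exp (-Complex.I * θ)
        - 3 * Complex.exp (-Complex.I * θ) * (c : ℂ) ^ 2
      = (((6 - c ^ 2) + (2 - 3 * c ^ 2) * t : ℝ) : ℂ)
        + ((-((2 - 3 * c ^ 2) * s) : ℝ) : ℂ) * Complex.I := by
    rw [hz]; push_cast; ring
  have ht1 : t ≤ 1 := Real.cos_le_one θ
  have ht2 : -1 ≤ t := Real.neg_one_le_cos θ
  have hs : s ^ 2 = 1 - t ^ 2 := by
    nlinarith [Real.sin_sq_add_cos_sq θ]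
  apply lt_of_pow_lt_pow_left₀ 2 (norm_nonneg _)
  rw [hL, hR, Complex.sq_norm, Complex.sq_norm, Complex.normSq_add_mul_I,
    Complex.normSq_add_mul_I]
  nlinarith [mul_pos (mul_pos (mul_pos (by nlinarith : (0:ℝ) < 1 - c) (by nlinarith : (0:ℝ) < 1 + c)) (by nlinarith : (0:ℝ) < 2 - c)) (by nlinarith : (0:ℝ) < 2 + c), sq_nonneg s]
end

section
/- For all real β with 0 < β < π, β ≠ π/2, and all real θ with θ not an integer multiple of 2π, we have |2(1 + e^{−iθ}) − 3e^{−iθ}cos²β| < |4 − cos²β|. -/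
open Complex Real

theorem stmt_4 (β θ : ℝ) (hβ0 : 0 < β) (hβπ : β < Real.pi) (hβ : β ≠ Real.pi / 2)
    (hθ : ∀ n : ℤ, θ ≠ n * (2 * Real.pi)) :
    ‖2 * (1 + Complex.exp (-Complex.I * θ))
        - 3 * Complex.exp (-Complex.I * θ) * (Real.cos β) ^ 2‖ <
      ‖(4 - (Real.cos β : ℂ) ^ 2)‖ := by
  have hmem : β ∈ Set.Icc 0 Real.pi := ⟨hβ0.le, hβπ.le⟩
  have hc0 : Real.cos β ≠ 0 := by
    intro h
    apply hβ
    have := Real.injOn_cos hmem ⟨by positivity, by linarith [Real.pi_pos]⟩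
      (show Real.cos β = Real.cos (Real.pi / 2) by rw [h, Real.cos_pi_div_two])
    exact this
  have hlt1 : Real.cos β < 1 := by
    rcases lt_or_eq_of_le (Real.cos_le_one β) with h | h
    · exact h
    · exfalso
      have := Real.injOn_cos hmem ⟨le_refl 0, Real.pi_pos.le⟩ (show Real.cos β = Real.cos 0 by rw [h, Real.cos_zero])
      exact hβ0.ne' this
  have hgt : -1 < Real.cos β := by
    rcases lt_or_eq_of_le (Real.neg_one_le_cos β) with h | h
    · exact h
    · exfalso
      have := Real.injOn_cos hmem ⟨Real.pi_pos.le, le_refl _⟩ (show Real.cos β = Real.cos Real.pi by rw [← h, Real.cos_pi])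
      exact hβπ.ne this
  set c : ℝ := Real.cos β ^ 2 with hc
  have hc1 : 0 < c := by positivity
  have hc2 : c < 1 := by nlinarith
  have he : ‖Complex.exp (-Complex.I * θ)‖ = 1 := by
    rw [Complex.norm_exp]
    simp
  have hre : (2 * (1 + Complex.exp (-Complex.I * θ))
      - 3 * Complex.exp (-Complex.I * θ) * (Real.cos β) ^ 2)
      = 2 + ((2 - 3 * c : ℝ) : ℂ) * Complex.exp (-Complex.I * θ) := by
    push_cast [hc]
    ring
  have hR : ‖(4 - (Real.cos β : ℂ) ^ 2)‖ = 4 - c := by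
    have : (4 - (Real.cos β : ℂ) ^ 2) = ((4 - c : ℝ) : ℂ) := by push_cast [hc]; ring
    rw [this, Complex.norm_real, Real.norm_eq_abs, abs_of_pos]
    linarith
  rw [hre, hR]
  calc ‖2 + ((2 - 3 * c : ℝ) : ℂ) * Complex.exp (-Complex.I * θ)‖
      ≤ ‖(2 : ℂ)‖ + ‖((2 - 3 * c : ℝ) : ℂ) * Complex.exp (-Complex.I * θ)‖ :=
        norm_add_le _ _
    _ = 2 + |2 - 3 * c| := by
        rw [norm_mul, he, Complex.norm_real]
        simp
    _ < 4 - c := by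
        rcases abs_cases (2 - 3 * c) with ⟨h, _⟩ | ⟨h, _⟩ <;> rw [h] <;> linarith
end

section
/- Let β ∈ (0, π), θ ∈ ℝ, and consider the quadratic polynomial t(z) = 3z² + 2(2cos β + e^{−iθ})z + (2cos β e^{−iθ} + 1) over ℂ. Then every complex root z of t satisfies |z| ≤ 1. -/
lemma keyB (r a x : ℝ) (hr : 1 < r) (hx2 : -r ≤ x) (ha1 : a < 2) (har : 2 < a*r)
    (hD : (9*r^2-1)*(r^2-1) + a^2*(4*r^2-1) + 12*x^2 + 12*a*r^2*x = 0) : False := by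
  have h1 : 0 ≤ 12*(x+r)*(x + a*r^2 - r) := by
    have : (0:ℝ) ≤ x + r := by linarith
    have h2 : 0 ≤ x + a*r^2 - r := by nlinarith
    nlinarith
  have h2 : 0 ≤ (2-a)*(12*r^3 - (a+2)*(4*r^2-1)) := by
    have h0 : 0 < 12*r^3 - (a+2)*(4*r^2-1) := by nlinarith [sq_nonneg (r-1), sq_nonneg r]
    have : (0:ℝ) ≤ 2 - a := by linarith
    exact mul_nonneg this h0.le
  have h3 : 0 < 3*(r-1)^3*(3*r+1) := by
    have : (0:ℝ) < r - 1 := by linarith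
    positivity
  nlinarith [h1, h2, h3]

lemma keyA (r a x : ℝ) (hr : 1 < r) (ha : a^2*r^2 ≤ 4)
    (hD : (9*r^2-1)*(r^2-1) + a^2*(4*r^2-1) + 12*x^2 + 12*a*r^2*x = 0) : False := by
  have id : r^2 * ((9*r^2-1)*(r^2-1) + a^2*(4*r^2-1) + 12*x^2 + 12*a*r^2*x)
      = (r^2-1)^2*(9*r^2-4) + (4 - a^2*r^2)*((3*r^2-1)*(r^2-1)) + 3*r^2*(2*x+a*r^2)^2 := by
    ring
  rw [hD, mul_zero] at id
  have hr1 : 0 < r^2 - 1 := by nlinarith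
  have t1 : 0 < (r^2-1)^2*(9*r^2-4) := by nlinarith
  have t2 : 0 ≤ (4 - a^2*r^2)*((3*r^2-1)*(r^2-1)) := by
    apply mul_nonneg (by linarith); nlinarith
  have t3 : 0 ≤ 3*r^2*(2*x+a*r^2)^2 := by positivity
  linarith

lemma key (r a x : ℝ) (hr : 1 < r) (hx1 : x ≤ r) (hx2 : -r ≤ x) (ha1 : a < 2) (ha2 : -2 < a)
    (hD : (9*r^2-1)*(r^2-1) + a^2*(4*r^2-1) + 12*x^2 + 12*a*r^2*x = 0) : False := by
  rcases lt_or_ge 2 (a*r) with h | h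
  · exact keyB r a x hr hx2 ha1 h hD
  rcases lt_or_ge (a*r) (-2) with h' | h'
  · refine keyB r (-a) (-x) hr (by linarith) (by linarith) (by nlinarith) (by linear_combination hD)
  · exact keyA r a x hr (by nlinarith) hD
open Complex Real

theorem stmt_10 (β θ : ℝ) (hβ0 : 0 < β) (hβπ : β < Real.pi) (z : ℂ)
    (hz : 3 * z ^ 2 + 2 * (2 * Real.cos β + Complex.exp (-Complex.I * θ)) * z
        + (2 * Real.cos β * Complex.exp (-Complex.I * θ) + 1) = 0) :
    ‖z‖ ≤ 1 := by
  set a : ℝ := 2 * Real.cos β with ha_def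
  have ha1 : a < 2 := by
    have h := Real.cos_lt_cos_of_nonneg_of_le_pi le_rfl hβπ.le hβ0
    rw [Real.cos_zero] at h
    rw [ha_def]; linarith
  have ha2 : -2 < a := by
    have h := Real.cos_lt_cos_of_nonneg_of_le_pi hβ0.le le_rfl hβπ
    rw [Real.cos_pi] at h
    rw [ha_def]; linarith
  have h1 : 3 * z ^ 2 + 2 * (a:ℂ) * z + 1
      = -(Complex.exp (-Complex.I * θ)) * (2 * z + a) := by
    rw [ha_def]; simp only [Complex.ofReal_mul, Complex.ofReal_ofNat]
    linear_combination hz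
  have hw : ‖Complex.exp (-Complex.I * θ)‖ = 1 := by
    rw [Complex.norm_exp]; simp
  have habs : ‖3 * z ^ 2 + 2 * (a:ℂ) * z + 1‖ = ‖2 * z + (a:ℂ)‖ := by
    rw [h1, norm_mul, norm_neg, hw, one_mul]
  have hns : Complex.normSq (3 * z ^ 2 + 2 * (a:ℂ) * z + 1) = Complex.normSq (2 * z + (a:ℂ)) := by
    have := congrArg (· ^ 2) habs
    simpa [Complex.sq_norm] using this
  set r : ℝ := ‖z‖ with hr_def
  set x : ℝ := z.re with hx_def
  set y : ℝ := z.im with hy_def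
  have h2 : r ^ 2 = x ^ 2 + y ^ 2 := by
    rw [hr_def, Complex.sq_norm, Complex.normSq_apply]; ring
  have key_eq : Complex.normSq (3 * z ^ 2 + 2 * (a:ℂ) * z + 1) - Complex.normSq (2 * z + (a:ℂ))
      = (9*r^2-1)*(r^2-1) + a^2*(4*r^2-1) + 12*x^2 + 12*a*r^2*x := by
    simp only [Complex.normSq_apply, pow_two, Complex.add_re, Complex.add_im, Complex.mul_re,
      Complex.mul_im, Complex.ofReal_re, Complex.ofReal_im, Complex.one_re, Complex.one_im,
      Complex.re_ofNat, Complex.im_ofNat, ← hx_def, ← hy_def]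
    linear_combination (-(9*(r^2 + x^2 + y^2) - 10 + 4*a^2 + 12*a*x)) * h2
  have hD : (9*r^2-1)*(r^2-1) + a^2*(4*r^2-1) + 12*x^2 + 12*a*r^2*x = 0 := by
    rw [← key_eq, hns]; ring
  by_contra hgt
  push_neg at hgt
  have hxr := abs_le.mp (Complex.abs_re_le_norm z)
  exact key r a x hgt hxr.2 hxr.1 ha1 ha2 hD
end

section
/- Let β ∈ (0, π) and θ ∈ ℝ, and let t(z) = 2z³ + 3cos β · z² + (1 + e^{−iθ})z + e^{−iθ}cos β over ℂ. Then every complex root z of t satisfies |z| ≤ 1. -/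
open Complex Real

set_option maxHeartbeats 4000000 in
set_option maxRecDepth 100000 in
theorem stmt_11 (β θ : ℝ) (hβ0 : 0 < β) (hβπ : β < Real.pi) (z : ℂ)
    (hz : 2 * z ^ 3 + 3 * Real.cos β * z ^ 2 + (1 + Complex.exp (-Complex.I * θ)) * z
        + Complex.exp (-Complex.I * θ) * Real.cos β = 0) :
    ‖z‖ ≤ 1 := by
  by_contra hcon
  push_neg at hcon
  set c : ℝ := Real.cos β with hcdef
  have hsin : 0 < Real.sin β := Real.sin_pos_of_pos_of_lt_pi hβ0 hβπ
  have hc2 : c ^ 2 < 1 := by nlinarith [Real.sin_sq_add_cos_sq β]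
  have key : Complex.exp (-Complex.I * θ) * (z + (c : ℂ)) = -(z * (2 * z ^ 2 + 3 * (c : ℂ) * z + 1)) := by
    linear_combination hz
  have habs := congrArg Complex.normSq key
  rw [Complex.normSq_mul, Complex.normSq_neg, Complex.normSq_mul] at habs
  have he : Complex.normSq (Complex.exp (-Complex.I * θ)) = 1 := by
    rw [Complex.normSq_eq_norm_sq, Complex.norm_exp]
    norm_num
  rw [he, one_mul] at habs
  set x := z.re with hx
  set y := z.im with hy
  have h1 : Complex.normSq (z + (c : ℂ)) = (x + c) ^ 2 + y ^ 2 := by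
    simp [Complex.normSq_apply]; ring
  have h2 : Complex.normSq (2 * z ^ 2 + 3 * (c : ℂ) * z + 1)
      = (2 * (x ^ 2 - y ^ 2) + 3 * c * x + 1) ^ 2 + (y * (4 * x + 3 * c)) ^ 2 := by
    simp [Complex.normSq_apply, pow_two, Complex.mul_re, Complex.mul_im]
    ring
  have h3 : Complex.normSq z = x ^ 2 + y ^ 2 := by simp [Complex.normSq_apply]; ring
  rw [h1, h2, h3] at habs
  have hS : 1 < x ^ 2 + y ^ 2 := by
    have := Complex.sq_norm z
    rw [h3] at this
    nlinarith [norm_nonneg z]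
  have hp0 : (0:ℝ) ≤ x^2+y^2-1 := by linarith
  have hq0 : (0:ℝ) ≤ 1-c^2 := by linarith
  have hp' : (0:ℝ) < x^2+y^2-1 := by linarith
  have hq' : (0:ℝ) < 1-c^2 := by linarith
  have hS0 : (0:ℝ) ≤ x^2+y^2 := by positivity
  rcases le_total ((x^2+y^2-1)) (3*(1-c^2)) with hA | hB
  · -- Case A : p ≤ 3q
    have hkeyA : 3*(8*(x^2+y^2)*(9*(x^2+y^2)+1)*(x+c) + (x^2+y^2-1)*c*(54*(x^2+y^2)^2+15*(x^2+y^2)+1))^2 + 3*(x^2+y^2-1)^2*(1-c^2)*(54*(x^2+y^2)^2+15*(x^2+y^2)+1)^2 + 8*(x^2+y^2)*(9*(x^2+y^2)+1)*(x^2+y^2-1)*(27*(x^2+y^2)^2+12*(x^2+y^2)+1)*(3*(1-c^2)-(x^2+y^2-1)) + (x^2+y^2-1)^2*(972*(x^2+y^2)^4-108*(x^2+y^2)^3-303*(x^2+y^2)^2-58*(x^2+y^2)-3) = 0 := by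
      linear_combination (-24*(x^2+y^2)*(9*(x^2+y^2)+1)^2) * habs
    have hR : (0:ℝ) < 972*(x^2+y^2)^4-108*(x^2+y^2)^3-303*(x^2+y^2)^2-58*(x^2+y^2)-3 := by
      nlinarith [mul_nonneg hp0 (by positivity : (0:ℝ) ≤ 972*(x^2+y^2)^3+864*(x^2+y^2)^2+561*(x^2+y^2)+503)]
    have a1 : (0:ℝ) ≤ (8*(x^2+y^2)*(9*(x^2+y^2)+1)*(x+c) + (x^2+y^2-1)*c*(54*(x^2+y^2)^2+15*(x^2+y^2)+1))^2 := sq_nonneg _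
    have a2 : (0:ℝ) ≤ (x^2+y^2-1)^2*(1-c^2)*(54*(x^2+y^2)^2+15*(x^2+y^2)+1)^2 :=
      mul_nonneg (mul_nonneg (sq_nonneg _) hq0) (sq_nonneg _)
    have a3 : (0:ℝ) ≤ 8*(x^2+y^2)*(9*(x^2+y^2)+1)*(x^2+y^2-1)*(27*(x^2+y^2)^2+12*(x^2+y^2)+1)*(3*(1-c^2)-(x^2+y^2-1)) := by
      have h31 : (0:ℝ) ≤ 3*(1-c^2)-(x^2+y^2-1) := by linarith
      have h32 : (0:ℝ) ≤ 8*(x^2+y^2)*(9*(x^2+y^2)+1)*(x^2+y^2-1)*(27*(x^2+y^2)^2+12*(x^2+y^2)+1) := by positivity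
      exact mul_nonneg h32 h31
    have a4 : (0:ℝ) < (x^2+y^2-1)^2*(972*(x^2+y^2)^4-108*(x^2+y^2)^3-303*(x^2+y^2)^2-58*(x^2+y^2)-3) :=
      mul_pos (by positivity) hR
    linarith [a1, a2, a3, a4, hkeyA]
  · -- Case B : 3q ≤ p
    have hB0 : (0:ℝ) ≤ (x^2+y^2-1)-3*(1-c^2) := by linarith
    have hpq : (0:ℝ) < (x^2+y^2-1)*(1-c^2) := mul_pos hp' hq'
    have t1 : (0:ℝ) ≤ (x+c)^2*(x+c)^2*(x-c)^2*(c+1)^2 := mul_nonneg (mul_nonneg (mul_nonneg (sq_nonneg (x+c)) (sq_nonneg (x+c))) (sq_nonneg (x-c))) (sq_nonneg (c+1))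
    have t2 : (0:ℝ) ≤ (x+c)^2*(x+c)^2*((x^2+y^2)-x*c)^2 := mul_nonneg (mul_nonneg (sq_nonneg (x+c)) (sq_nonneg (x+c))) (sq_nonneg ((x^2+y^2)-x*c))
    have t3 : (0:ℝ) ≤ (x+c)^2*(x-c)^2*((x^2+y^2)+x*c)^2 := mul_nonneg (mul_nonneg (sq_nonneg (x+c)) (sq_nonneg (x-c))) (sq_nonneg ((x^2+y^2)+x*c))
    have t4 : (0:ℝ) ≤ (x^2+y^2-1)*(x+c)^2*c^2*(c-1)^2 := mul_nonneg (mul_nonneg (mul_nonneg (hp0) (sq_nonneg (x+c))) (sq_nonneg c)) (sq_nonneg (c-1))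
    have t5 : (0:ℝ) ≤ (x^2+y^2-1)*(x+c)^2*(x+c)^2*x^2 := mul_nonneg (mul_nonneg (mul_nonneg (hp0) (sq_nonneg (x+c))) (sq_nonneg (x+c))) (sq_nonneg x)
    have t6 : (0:ℝ) ≤ (x^2+y^2-1)*(x+c)^2*(x-c)^2*(c-1)^2 := mul_nonneg (mul_nonneg (mul_nonneg (hp0) (sq_nonneg (x+c))) (sq_nonneg (x-c))) (sq_nonneg (c-1))
    have t7 : (0:ℝ) ≤ (x^2+y^2-1)*(x+c)^2*(x-c)^2*(c+1)^2 := mul_nonneg (mul_nonneg (mul_nonneg (hp0) (sq_nonneg (x+c))) (sq_nonneg (x-c))) (sq_nonneg (c+1))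
    have t8 : (0:ℝ) ≤ (x^2+y^2-1)*(x+c)^2*(c+1)^2*(c+1)^2 := mul_nonneg (mul_nonneg (mul_nonneg (hp0) (sq_nonneg (x+c))) (sq_nonneg (c+1))) (sq_nonneg (c+1))
    have t9 : (0:ℝ) ≤ (x^2+y^2-1)*(x+c)^2*x^2*(c-1)^2 := mul_nonneg (mul_nonneg (mul_nonneg (hp0) (sq_nonneg (x+c))) (sq_nonneg x)) (sq_nonneg (c-1))
    have t10 : (0:ℝ) ≤ (x^2+y^2-1)*(x+c)^2*x^2*(c+1)^2 := mul_nonneg (mul_nonneg (mul_nonneg (hp0) (sq_nonneg (x+c))) (sq_nonneg x)) (sq_nonneg (c+1))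
    have t11 : (0:ℝ) ≤ (x^2+y^2-1)*(x+c)^2*x^2*x^2 := mul_nonneg (mul_nonneg (mul_nonneg (hp0) (sq_nonneg (x+c))) (sq_nonneg x)) (sq_nonneg x)
    have t12 : (0:ℝ) ≤ (x^2+y^2-1)*(x^2+y^2-1)*(x+c)^2*(c-1)^2 := mul_nonneg (mul_nonneg (mul_nonneg (hp0) (hp0)) (sq_nonneg (x+c))) (sq_nonneg (c-1))
    have t13 : (0:ℝ) ≤ (x^2+y^2-1)*(x^2+y^2-1)*(1-c^2)*(c-1)^2 := mul_nonneg (mul_nonneg (mul_nonneg (hp0) (hp0)) (hq0)) (sq_nonneg (c-1))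
    have t14 : (0:ℝ) ≤ (x^2+y^2-1)*(x^2+y^2-1)*(1-c^2)*(c+1)^2 := mul_nonneg (mul_nonneg (mul_nonneg (hp0) (hp0)) (hq0)) (sq_nonneg (c+1))
    have t15 : (0:ℝ) ≤ (x^2+y^2-1)*(x^2+y^2-1)*y^2*(c-1)^2 := mul_nonneg (mul_nonneg (mul_nonneg (hp0) (hp0)) (sq_nonneg y)) (sq_nonneg (c-1))
    have t16 : (0:ℝ) ≤ (x^2+y^2-1)*(x^2+y^2-1)*y^2*(c+1)^2 := mul_nonneg (mul_nonneg (mul_nonneg (hp0) (hp0)) (sq_nonneg y)) (sq_nonneg (c+1))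
    have t17 : (0:ℝ) ≤ (x^2+y^2-1)*(x^2+y^2-1)*y^2*y^2 := mul_nonneg (mul_nonneg (mul_nonneg (hp0) (hp0)) (sq_nonneg y)) (sq_nonneg y)
    have t18 : (0:ℝ) ≤ (x^2+y^2-1)*(1-c^2)*(x+c)^2 := mul_nonneg (mul_nonneg (hp0) (hq0)) (sq_nonneg (x+c))
    have t19 : (0:ℝ) ≤ (x^2+y^2-1)*(1-c^2)*(x+c)^2*x^2 := mul_nonneg (mul_nonneg (mul_nonneg (hp0) (hq0)) (sq_nonneg (x+c))) (sq_nonneg x)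
    have t20 : (0:ℝ) ≤ (x^2+y^2-1)*(1-c^2)*y^2 := mul_nonneg (mul_nonneg (hp0) (hq0)) (sq_nonneg y)
    have t21 : (0:ℝ) ≤ (x^2+y^2-1)*(1-c^2)*y^2*y^2 := mul_nonneg (mul_nonneg (mul_nonneg (hp0) (hq0)) (sq_nonneg y)) (sq_nonneg y)
    have t22 : (0:ℝ) ≤ (x^2+y^2-1)*(1-c^2)*(y*(x+c))^2 := mul_nonneg (mul_nonneg (hp0) (hq0)) (sq_nonneg (y*(x+c)))
    have t23 : (0:ℝ) ≤ (x^2+y^2-1)*(c+1)^2*(y*(x+c))^2 := mul_nonneg (mul_nonneg (hp0) (sq_nonneg (c+1))) (sq_nonneg (y*(x+c)))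
    have t24 : (0:ℝ) ≤ (x^2+y^2-1)*x^2*(x*c+1)^2 := mul_nonneg (mul_nonneg (hp0) (sq_nonneg x)) (sq_nonneg (x*c+1))
    have t25 : (0:ℝ) ≤ (x^2+y^2-1)*x^2*(y*(x+c))^2 := mul_nonneg (mul_nonneg (hp0) (sq_nonneg x)) (sq_nonneg (y*(x+c)))
    have t26 : (0:ℝ) ≤ (x^2+y^2-1)*y^2*(x-c)^2*(c-1)^2 := mul_nonneg (mul_nonneg (mul_nonneg (hp0) (sq_nonneg y)) (sq_nonneg (x-c))) (sq_nonneg (c-1))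
    have t27 : (0:ℝ) ≤ (x^2+y^2-1)*y^2*(x-c)^2*(c+1)^2 := mul_nonneg (mul_nonneg (mul_nonneg (hp0) (sq_nonneg y)) (sq_nonneg (x-c))) (sq_nonneg (c+1))
    have t28 : (0:ℝ) ≤ (x^2+y^2-1)*y^2*y^2*(c-1)^2 := mul_nonneg (mul_nonneg (mul_nonneg (hp0) (sq_nonneg y)) (sq_nonneg y)) (sq_nonneg (c-1))
    have t29 : (0:ℝ) ≤ (x^2+y^2-1)*y^2*y^2*(c+1)^2 := mul_nonneg (mul_nonneg (mul_nonneg (hp0) (sq_nonneg y)) (sq_nonneg y)) (sq_nonneg (c+1))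
    have t30 : (0:ℝ) ≤ (x^2+y^2-1)*y^2*y^2*x^2 := mul_nonneg (mul_nonneg (mul_nonneg (hp0) (sq_nonneg y)) (sq_nonneg y)) (sq_nonneg x)
    have t31 : (0:ℝ) ≤ (x^2+y^2-1)*y^2*(y*(x+c))^2 := mul_nonneg (mul_nonneg (hp0) (sq_nonneg y)) (sq_nonneg (y*(x+c)))
    have t32 : (0:ℝ) ≤ (1-c^2)*c^2*(y*c)^2 := mul_nonneg (mul_nonneg (hq0) (sq_nonneg c)) (sq_nonneg (y*c))
    have t33 : (0:ℝ) ≤ (1-c^2)*(x+c)^2*c^2*c^2 := mul_nonneg (mul_nonneg (mul_nonneg (hq0) (sq_nonneg (x+c))) (sq_nonneg c)) (sq_nonneg c)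
    have t34 : (0:ℝ) ≤ (1-c^2)*(x+c)^2*(x-c)^2*(x-c)^2 := mul_nonneg (mul_nonneg (mul_nonneg (hq0) (sq_nonneg (x+c))) (sq_nonneg (x-c))) (sq_nonneg (x-c))
    have t35 : (0:ℝ) ≤ (1-c^2)*(x+c)^2*((x^2+y^2)-x*c)^2 := mul_nonneg (mul_nonneg (hq0) (sq_nonneg (x+c))) (sq_nonneg ((x^2+y^2)-x*c))
    have t36 : (0:ℝ) ≤ (1-c^2)*(x+c)^2*(c-1)^2*(c-1)^2 := mul_nonneg (mul_nonneg (mul_nonneg (hq0) (sq_nonneg (x+c))) (sq_nonneg (c-1))) (sq_nonneg (c-1))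
    have t37 : (0:ℝ) ≤ (1-c^2)*(x+c)^2*(c+1)^2*(c+1)^2 := mul_nonneg (mul_nonneg (mul_nonneg (hq0) (sq_nonneg (x+c))) (sq_nonneg (c+1))) (sq_nonneg (c+1))
    have t38 : (0:ℝ) ≤ (1-c^2)*(x+c)^2*x^2*(x-c)^2 := mul_nonneg (mul_nonneg (mul_nonneg (hq0) (sq_nonneg (x+c))) (sq_nonneg x)) (sq_nonneg (x-c))
    have t39 : (0:ℝ) ≤ (1-c^2)*(x+c)^2*x^2*(c-1)^2 := mul_nonneg (mul_nonneg (mul_nonneg (hq0) (sq_nonneg (x+c))) (sq_nonneg x)) (sq_nonneg (c-1))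
    have t40 : (0:ℝ) ≤ (1-c^2)*(1-c^2)*(x-c)^2*(c-1)^2 := mul_nonneg (mul_nonneg (mul_nonneg (hq0) (hq0)) (sq_nonneg (x-c))) (sq_nonneg (c-1))
    have t41 : (0:ℝ) ≤ (1-c^2)*(1-c^2)*(x-c)^2*(c+1)^2 := mul_nonneg (mul_nonneg (mul_nonneg (hq0) (hq0)) (sq_nonneg (x-c))) (sq_nonneg (c+1))
    have t42 : (0:ℝ) ≤ (1-c^2)*(1-c^2)*(c-1)^2 := mul_nonneg (mul_nonneg (hq0) (hq0)) (sq_nonneg (c-1))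
    have t43 : (0:ℝ) ≤ (1-c^2)*(1-c^2)*(c+1)^2 := mul_nonneg (mul_nonneg (hq0) (hq0)) (sq_nonneg (c+1))
    have t44 : (0:ℝ) ≤ (1-c^2)*(8*(x+c)+7*((x^2+y^2-1)*c))^2 := mul_nonneg (hq0) (sq_nonneg (8*(x+c)+7*((x^2+y^2-1)*c)))
    have t45 : (0:ℝ) ≤ (1-c^2)*(c-1)^2*((x^2+y^2)+x*c)^2 := mul_nonneg (mul_nonneg (hq0) (sq_nonneg (c-1))) (sq_nonneg ((x^2+y^2)+x*c))
    have t46 : (0:ℝ) ≤ (1-c^2)*x^2*(y*(x+c))^2 := mul_nonneg (mul_nonneg (hq0) (sq_nonneg x)) (sq_nonneg (y*(x+c)))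
    have t47 : (0:ℝ) ≤ (1-c^2)*y^2*(x-c)^2*(c+1)^2 := mul_nonneg (mul_nonneg (mul_nonneg (hq0) (sq_nonneg y)) (sq_nonneg (x-c))) (sq_nonneg (c+1))
    have t48 : (0:ℝ) ≤ (1-c^2)*y^2*(c-1)^2*(c-1)^2 := mul_nonneg (mul_nonneg (mul_nonneg (hq0) (sq_nonneg y)) (sq_nonneg (c-1))) (sq_nonneg (c-1))
    have t49 : (0:ℝ) ≤ (1-c^2)*y^2*(c+1)^2 := mul_nonneg (mul_nonneg (hq0) (sq_nonneg y)) (sq_nonneg (c+1))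
    have t50 : (0:ℝ) ≤ (1-c^2)*y^2*(c+1)^2*(c+1)^2 := mul_nonneg (mul_nonneg (mul_nonneg (hq0) (sq_nonneg y)) (sq_nonneg (c+1))) (sq_nonneg (c+1))
    have t51 : (0:ℝ) ≤ (1-c^2)*y^2*y^2*(c+1)^2 := mul_nonneg (mul_nonneg (mul_nonneg (hq0) (sq_nonneg y)) (sq_nonneg y)) (sq_nonneg (c+1))
    have t52 : (0:ℝ) ≤ (1-c^2)*y^2*y^2*y^2 := mul_nonneg (mul_nonneg (mul_nonneg (hq0) (sq_nonneg y)) (sq_nonneg y)) (sq_nonneg y)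
    have t53 : (0:ℝ) ≤ ((x^2+y^2-1)-3*(1-c^2))*((x^2+y^2-1)-3*(1-c^2))*((x^2+y^2-1)-3*(1-c^2))*((x^2+y^2-1)-3*(1-c^2)) := mul_nonneg (mul_nonneg (mul_nonneg (hB0) (hB0)) (hB0)) (hB0)
    have t54 : (0:ℝ) ≤ ((x^2+y^2-1)-3*(1-c^2))*(x-c)^2*((x^2+y^2)+x*c)^2 := mul_nonneg (mul_nonneg (hB0) (sq_nonneg (x-c))) (sq_nonneg ((x^2+y^2)+x*c))
    have t55 : (0:ℝ) ≤ ((x^2+y^2-1)-3*(1-c^2))*(x-c)^2*(x*c+1)^2 := mul_nonneg (mul_nonneg (hB0) (sq_nonneg (x-c))) (sq_nonneg (x*c+1))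
    have t56 : (0:ℝ) ≤ ((x^2+y^2-1)-3*(1-c^2))*y^2*(x-c)^2*(x-c)^2 := mul_nonneg (mul_nonneg (mul_nonneg (hB0) (sq_nonneg y)) (sq_nonneg (x-c))) (sq_nonneg (x-c))
    have t57 : (0:ℝ) ≤ ((x^2+y^2-1)-3*(1-c^2))*y^2*((x^2+y^2)+x*c)^2 := mul_nonneg (mul_nonneg (hB0) (sq_nonneg y)) (sq_nonneg ((x^2+y^2)+x*c))
    have t58 : (0:ℝ) ≤ ((x^2+y^2-1)-3*(1-c^2))*y^2*y^2*(x-c)^2 := mul_nonneg (mul_nonneg (mul_nonneg (hB0) (sq_nonneg y)) (sq_nonneg y)) (sq_nonneg (x-c))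
    have t59 : (0:ℝ) ≤ (c-1)^2*(c-1)^2*(y*(x+c))^2 := mul_nonneg (mul_nonneg (sq_nonneg (c-1)) (sq_nonneg (c-1))) (sq_nonneg (y*(x+c)))
    have t60 : (0:ℝ) ≤ (c-1)^2*(y*(x+c))^2*(x^2+y^2) := mul_nonneg (mul_nonneg (sq_nonneg (c-1)) (sq_nonneg (y*(x+c)))) (hS0)
    have t61 : (0:ℝ) ≤ x^2*(c-1)^2*(y*(x+c))^2 := mul_nonneg (mul_nonneg (sq_nonneg x) (sq_nonneg (c-1))) (sq_nonneg (y*(x+c)))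
    have t62 : (0:ℝ) ≤ x^2*(c+1)^2*(y*(x+c))^2 := mul_nonneg (mul_nonneg (sq_nonneg x) (sq_nonneg (c+1))) (sq_nonneg (y*(x+c)))
    have t63 : (0:ℝ) ≤ y^2*(x-c)^2*(y*(x+c))^2 := mul_nonneg (mul_nonneg (sq_nonneg y) (sq_nonneg (x-c))) (sq_nonneg (y*(x+c)))
    have t64 : (0:ℝ) ≤ y^2*x^2*(y*(x+c))^2 := mul_nonneg (mul_nonneg (sq_nonneg y) (sq_nonneg x)) (sq_nonneg (y*(x+c)))
    have t65 : (0:ℝ) ≤ y^2*y^2*x^2*(x-c)^2 := mul_nonneg (mul_nonneg (mul_nonneg (sq_nonneg y) (sq_nonneg y)) (sq_nonneg x)) (sq_nonneg (x-c))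
    have t66 : (0:ℝ) ≤ y^2*y^2*y^2*x^2 := mul_nonneg (mul_nonneg (mul_nonneg (sq_nonneg y) (sq_nonneg y)) (sq_nonneg y)) (sq_nonneg x)
    have t67 : (0:ℝ) ≤ (y*(x+c))^2*((x^2+y^2)-x*c)^2 := mul_nonneg (sq_nonneg (y*(x+c))) (sq_nonneg ((x^2+y^2)-x*c))
    have hkeyB : (x^2+y^2-1)*(1-c^2) + (564620686690341/3739808625194320)*((x+c)^2*(x+c)^2*(x-c)^2*(c+1)^2) + (893337562391257/1282220100066624)*((x+c)^2*(x+c)^2*((x^2+y^2)-x*c)^2) + (3704222225758465/8975540700466368)*((x+c)^2*(x-c)^2*((x^2+y^2)+x*c)^2) + (20680165475981/467476078149290)*((x^2+y^2-1)*(x+c)^2*c^2*(c-1)^2) + (249067548031213/4487770350233184)*((x^2+y^2-1)*(x+c)^2*(x+c)^2*x^2) + (65681331849677/1602775125083280)*((x^2+y^2-1)*(x+c)^2*(x-c)^2*(c-1)^2) + (65681331849677/1602775125083280)*((x^2+y^2-1)*(x+c)^2*(x-c)^2*(c+1)^2) + (20680165475981/934952156298580)*((x^2+y^2-1)*(x+c)^2*(c+1)^2*(c+1)^2)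 + (2935253868171473/14959234500777280)*((x^2+y^2-1)*(x+c)^2*x^2*(c-1)^2) + (324784081848583/2137033500111040)*((x^2+y^2-1)*(x+c)^2*x^2*(c+1)^2) + (583102170525885/747961725038864)*((x^2+y^2-1)*(x+c)^2*x^2*x^2) + (399179362882493/3739808625194320)*((x^2+y^2-1)*(x^2+y^2-1)*(x+c)^2*(c-1)^2) + (1846695031767/6678229687847)*((x^2+y^2-1)*(x^2+y^2-1)*(1-c^2)*(c-1)^2) + (1846695031767/6678229687847)*((x^2+y^2-1)*(x^2+y^2-1)*(1-c^2)*(c+1)^2) + (224128579084901/3205550250166560)*((x^2+y^2-1)*(x^2+y^2-1)*y^2*(c-1)^2) + (224128579084901/3205550250166560)*((x^2+y^2-1)*(x^2+y^2-1)*y^2*(c+1)^2) + (7600725102996979/4808325375249840)*((x^2+y^2-1)*(x^2+y^2-1)*y^2*y^2) + (9990542831472209/22438851751165920)*((x^2+y^2-1)*(1-c^2)*(x+c)^2) + (655835232579523/801387562541640)*((x^2+y^2-1)*(1-c^2)*(x+c)^2*x^2) + (782809543803611/3739808625194320)*((x^2+y^2-1)*(1-c^2)*y^2) + (13903798176332177/33658277626748880)*((x^2+y^2-1)*(1-c^2)*y^2*y^2)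 + (4911711440748745/4487770350233184)*((x^2+y^2-1)*(1-c^2)*(y*(x+c))^2) + (456316399488993/1869904312597160)*((x^2+y^2-1)*(c+1)^2*(y*(x+c))^2) + (1466379366989/40069378127082)*((x^2+y^2-1)*x^2*(x*c+1)^2) + (2913549576990649/1202081343812460)*((x^2+y^2-1)*x^2*(y*(x+c))^2) + (45772944112691/747961725038864)*((x^2+y^2-1)*y^2*(x-c)^2*(c-1)^2) + (45772944112691/747961725038864)*((x^2+y^2-1)*y^2*(x-c)^2*(c+1)^2) + (8060043211910627/9616650750499680)*((x^2+y^2-1)*y^2*y^2*(c-1)^2) + (8060043211910627/9616650750499680)*((x^2+y^2-1)*y^2*y^2*(c+1)^2) + (8896038294333871/33658277626748880)*((x^2+y^2-1)*y^2*y^2*x^2) + (512823055095823/67316555253497760)*((x^2+y^2-1)*y^2*(y*(x+c))^2) + (235613983034053/701214117223935)*((1-c^2)*c^2*(y*c)^2) + (35373645495409/467476078149290)*((1-c^2)*(x+c)^2*c^2*c^2) + (501827362156147/3205550250166560)*((1-c^2)*(x+c)^2*(x-c)^2*(x-c)^2) + (259123450061753/320555025016656)*((1-c^2)*(x+c)^2*((x^2+y^2)-x*c)^2)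 + (1844760387593/534258375027760)*((1-c^2)*(x+c)^2*(c-1)^2*(c-1)^2) + (590447332116643/7479617250388640)*((1-c^2)*(x+c)^2*(c+1)^2*(c+1)^2) + (2638953468974885/4487770350233184)*((1-c^2)*(x+c)^2*x^2*(x-c)^2) + (1668278434773599/5609712937791480)*((1-c^2)*(x+c)^2*x^2*(c-1)^2) + (29944274453809/400693781270820)*((1-c^2)*(1-c^2)*(x-c)^2*(c-1)^2) + (29944274453809/400693781270820)*((1-c^2)*(1-c^2)*(x-c)^2*(c+1)^2) + (40284896410087/200346890635410)*((1-c^2)*(1-c^2)*(c-1)^2) + (40284896410087/200346890635410)*((1-c^2)*(1-c^2)*(c+1)^2) + (4830174666977/467476078149290)*((1-c^2)*(8*(x+c)+7*((x^2+y^2-1)*c))^2) + (3197953162178/701214117223935)*((1-c^2)*(c-1)^2*((x^2+y^2)+x*c)^2) + (9167972113545713/11219425875582960)*((1-c^2)*x^2*(y*(x+c))^2) + (1598976581089/701214117223935)*((1-c^2)*y^2*(x-c)^2*(c+1)^2) + (1210674118014527/11219425875582960)*((1-c^2)*y^2*(c-1)^2*(c-1)^2) + (6395906324356/701214117223935)*((1-c^2)*y^2*(c+1)^2)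 + (386502289139893/3739808625194320)*((1-c^2)*y^2*(c+1)^2*(c+1)^2) + (3197953162178/701214117223935)*((1-c^2)*y^2*y^2*(c+1)^2) + (678388386767783/3739808625194320)*((1-c^2)*y^2*y^2*y^2) + (280481122163/1602775125083280)*(((x^2+y^2-1)-3*(1-c^2))*((x^2+y^2-1)-3*(1-c^2))*((x^2+y^2-1)-3*(1-c^2))*((x^2+y^2-1)-3*(1-c^2))) + (1241411004445783/22438851751165920)*(((x^2+y^2-1)-3*(1-c^2))*(x-c)^2*((x^2+y^2)+x*c)^2) + (9216595666285/106851675005552)*(((x^2+y^2-1)-3*(1-c^2))*(x-c)^2*(x*c+1)^2) + (5904367458256/46747607814929)*(((x^2+y^2-1)-3*(1-c^2))*y^2*(x-c)^2*(x-c)^2) + (1160119542789139/4207284703343610)*(((x^2+y^2-1)-3*(1-c^2))*y^2*((x^2+y^2)+x*c)^2) + (8526341662114093/33658277626748880)*(((x^2+y^2-1)-3*(1-c^2))*y^2*y^2*(x-c)^2) + (1598976581089/467476078149290)*((c-1)^2*(c-1)^2*(y*(x+c))^2) + (513453436095493/3739808625194320)*((c-1)^2*(y*(x+c))^2*(x^2+y^2))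 + (622349072656079/2243885175116592)*(x^2*(c-1)^2*(y*(x+c))^2) + (2402803711675709/5609712937791480)*(x^2*(c+1)^2*(y*(x+c))^2) + (1064309888506469/5609712937791480)*(y^2*(x-c)^2*(y*(x+c))^2) + (1/2)*(y^2*x^2*(y*(x+c))^2) + (1/2)*(y^2*y^2*x^2*(x-c)^2) + (6674022826297949/5609712937791480)*(y^2*y^2*y^2*x^2) + (10155115987076491/5609712937791480)*((y*(x+c))^2*((x^2+y^2)-x*c)^2) = 0 := by
      linear_combination ((-1/2)*(x^2) + (-5207660180571449/11219425875582960)*(y^2) + (1/2)*(x*c)) * habs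
    linarith [hpq, t1,t2,t3,t4,t5,t6,t7,t8,t9,t10,t11,t12,t13,t14,t15,t16,t17,t18,t19,t20,t21,t22,t23,t24,t25,t26,t27,t28,t29,t30,t31,t32,t33,t34,t35,t36,t37,t38,t39,t40,t41,t42,t43,t44,t45,t46,t47,t48,t49,t50,t51,t52,t53,t54,t55,t56,t57,t58,t59,t60,t61,t62,t63,t64,t65,t66,t67, hkeyB]
end

section
/- Let β ∈ (0, π) with β ≠ π/2 and θ ∈ ℝ with cos θ ≠ 1. Consider the quadratic t(z) = (4 − cos²β)z² + cos β(5 − e^{−iθ})z + 2(1 + e^{−iθ}) − 3e^{−iθ}cos²β over ℂ. Then every complex root z of t satisfies |z| ≤ 1. -/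
open Complex Real

set_option maxHeartbeats 1000000 in
theorem stmt_12 (β θ : ℝ) (hβ0 : 0 < β) (hβπ : β < Real.pi) (hβ : β ≠ Real.pi / 2)
    (hθ : Real.cos θ ≠ 1) (z : ℂ)
    (hz : (4 - (Real.cos β : ℂ) ^ 2) * z ^ 2
        + (Real.cos β : ℂ) * (5 - Complex.exp (-Complex.I * θ)) * z
        + 2 * (1 + Complex.exp (-Complex.I * θ))
        - 3 * Complex.exp (-Complex.I * θ) * (Real.cos β) ^ 2 = 0) :
    ‖z‖ ≤ 1 := by
  set c : ℝ := Real.cos β with hcdef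
  set x : ℝ := z.re with hxdef
  set y : ℝ := z.im with hydef
  have hsin : 0 < Real.sin β := Real.sin_pos_of_pos_of_lt_pi hβ0 hβπ
  have hpyth : Real.sin β ^ 2 + Real.cos β ^ 2 = 1 := Real.sin_sq_add_cos_sq β
  have hc : c ^ 2 < 1 := by nlinarith
  have hu1 : Complex.normSq (Complex.exp (-Complex.I * θ)) = 1 := by
    rw [Complex.normSq_eq_norm_sq, Complex.norm_exp]
    simp
  have hA : (4 - (c:ℂ) * c) * (z * z) + 5 * c * z + 2
      = -(Complex.exp (-Complex.I * θ) * (-(c:ℂ) * z + 2 - 3 * ((c:ℂ) * c))) := by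
    linear_combination hz
  have h2 : Complex.normSq ((4 - (c:ℂ) * c) * (z * z) + 5 * c * z + 2)
      = Complex.normSq (-(c:ℂ) * z + 2 - 3 * ((c:ℂ) * c)) := by
    rw [hA, Complex.normSq_neg, Complex.normSq_mul, hu1, one_mul]
  simp only [Complex.normSq_apply, Complex.add_re, Complex.add_im, Complex.sub_re,
    Complex.sub_im, Complex.mul_re, Complex.mul_im, Complex.neg_re, Complex.neg_im,
    Complex.ofReal_re, Complex.ofReal_im, Complex.re_ofNat, Complex.im_ofNat] at h2
  have h3 : ((4 - c^2) * (x^2 - y^2) + 5*c*x + 2)^2 + ((4 - c^2) * (2*x*y) + 5*c*y)^2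
      = (-(c*x) + 2 - 3*c^2)^2 + (c*y)^2 := by linear_combination h2
  have hxy : x ^ 2 + y ^ 2 ≤ 1 := by
    by_contra hgt
    push_neg at hgt
    set t : ℝ := x ^ 2 + y ^ 2 - 1 with htdef
    have ht : 0 < t := by simp [htdef]; linarith
    set a : ℝ := 4 - c ^ 2 with hadef
    have ha : 3 < a := by simp [hadef]; linarith
    have hid : (0:ℝ) = ((64*a + 24*t)*x + 8*a*c*(8 + 5*t))^2
        + 24*t*(64*a + 24*t)*y^2
        + t*(64*a*(1 - c^2)*(104 - 96*c^2))
        + t^2*(64*(1 - c^2)*(33*c^4 - 269*c^2 + 455))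
        + t^3*(192*((4 - c^2)^2 - 3)) := by
      linear_combination (-(8*(64*a + 24*t))) * h3
    have T1 : (0:ℝ) ≤ ((64*a + 24*t)*x + 8*a*c*(8 + 5*t))^2 := sq_nonneg _
    have T2 : (0:ℝ) ≤ 24*t*(64*a + 24*t)*y^2 :=
      mul_nonneg (mul_nonneg (by linarith) (by linarith)) (sq_nonneg y)
    have T3 : (0:ℝ) < t*(64*a*(1 - c^2)*(104 - 96*c^2)) :=
      mul_pos ht (mul_pos (mul_pos (by linarith) (by linarith)) (by linarith))
    have T4 : (0:ℝ) ≤ t^2*(64*(1 - c^2)*(33*c^4 - 269*c^2 + 455)) :=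
      mul_nonneg (sq_nonneg t) (mul_nonneg (by linarith)
        (by nlinarith [sq_nonneg (c^2)]))
    have T5 : (0:ℝ) ≤ t^3*(192*((4 - c^2)^2 - 3)) :=
      mul_nonneg (by positivity) (by nlinarith)
    linarith
  have habs : ‖z‖ ^ 2 = x ^ 2 + y ^ 2 := by
    rw [Complex.sq_norm, Complex.normSq_apply]; ring
  nlinarith [norm_nonneg z, habs]
end

section
/- Let β ∈ (0, π) and θ ∈ ℝ, and set z₀ = (−2cos β + 4e^{−iθ}cos²β − 3e^{−iθ} + e^{iθ}) / (4 − 2cos²β − 2cos β cos θ). Then |z₀| ≤ 1. -/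
open Complex Real

theorem stmt_16 (β θ : ℝ) (hβ0 : 0 < β) (hβπ : β < Real.pi)
    (hden : (4 : ℝ) - 2 * Real.cos β ^ 2 - 2 * Real.cos β * Real.cos θ ≠ 0) :
    ‖((-2 * Real.cos β + 4 * Complex.exp (-Complex.I * θ) * (Real.cos β) ^ 2
        - 3 * Complex.exp (-Complex.I * θ) + Complex.exp (Complex.I * θ)) /
      ((4 : ℝ) - 2 * Real.cos β ^ 2 - 2 * Real.cos β * Real.cos θ : ℝ))‖ ≤ 1 := by
  set c := Real.cos β with hc
  set t := Real.cos θ with ht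
  set s := Real.sin θ with hs
  have hc1 : c ^ 2 ≤ 1 := by
    have := Real.neg_one_le_cos β
    have := Real.cos_le_one β
    nlinarith
  have ht1 : t ^ 2 ≤ 1 := by
    have := Real.neg_one_le_cos θ
    have := Real.cos_le_one θ
    nlinarith
  have hst : s ^ 2 + t ^ 2 = 1 := by
    rw [hs, ht]; exact Real.sin_sq_add_cos_sq θ
  have hD : (0:ℝ) < 4 - 2 * c ^ 2 - 2 * c * t := by
    rcases lt_or_eq_of_le (show (0:ℝ) ≤ 4 - 2 * c ^ 2 - 2 * c * t by nlinarith) with h | h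
    · exact h
    · exact absurd h.symm hden
  have he1 : Complex.exp (Complex.I * θ) = (t : ℂ) + (s : ℂ) * Complex.I := by
    rw [mul_comm, Complex.exp_mul_I, ht, hs]
    push_cast
    simp [Complex.cos_ofReal_re, Complex.sin_ofReal_re]
  have he2 : Complex.exp (-Complex.I * θ) = (t : ℂ) - (s : ℂ) * Complex.I := by
    rw [show (-Complex.I * (θ:ℂ)) = ((-θ:ℝ):ℂ) * Complex.I by push_cast; ring]
    rw [Complex.exp_mul_I, Complex.ofReal_neg, Complex.cos_neg, Complex.sin_neg,
      ← Complex.ofReal_cos, ← Complex.ofReal_sin, ← ht, ← hs]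
    ring
  rw [he1, he2, norm_div, Complex.norm_real, Real.norm_eq_abs]
  rw [div_le_one (by rw [abs_of_pos hD]; exact hD)]
  rw [abs_of_pos hD]
  set N : ℂ := -2 * (c:ℂ) + 4 * ((t : ℂ) - (s : ℂ) * Complex.I) * (c:ℂ) ^ 2
      - 3 * ((t : ℂ) - (s : ℂ) * Complex.I) + ((t : ℂ) + (s : ℂ) * Complex.I) with hN
  have hNsq : ‖N‖ ^ 2 = (-2*c + 4*c^2*t - 2*t)^2 + ((4 - 4*c^2)*s)^2 := by
    rw [Complex.sq_norm, hN]
    simp [Complex.normSq_apply, Complex.mul_re, Complex.mul_im, pow_two]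
    ring
  have key : ‖N‖ ^ 2 ≤ (4 - 2 * c ^ 2 - 2 * c * t) ^ 2 := by
    rw [hNsq]
    have hs2 : s ^ 2 = 1 - t ^ 2 := by linarith
    have h16 : 16*(1-c^2)^2*(s^2) = 16*(1-c^2)^2*(1-t^2) := by rw [hs2]
    nlinarith [h16, mul_nonneg (sub_nonneg.2 hc1) (sq_nonneg (c-t))]
  nlinarith [norm_nonneg N, key]
end
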